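/- arXiv:1609.04191 — 3 statements merged into one kernel-verified Lean document; each statement's English description precedes it below -/
import Mathlib

section
/- For k ≥ 2 define the (k-1)²×(k-1)² matrix H indexed by pairs (i,j), (i',j') with i,j,i',j' ∈ [k-1], where H encodes the quadratic form: for any k×k real matrix ε = (ε_{ij}) whose all row sums and column sums are zero, ∑_{i,j,i',j' ∈ [k-1]} H_{(i,j),(i',j')} ε_{ij} ε_{i'j'} = ∑_{i,j=1}^k ε_{ij}². Such a matrix H exists, is positive definite, and det H = k^{2(k-1)}. -/
open Finset Matrix Kronecker

lemma quad_key (n : ℕ) (x : Fin n → Fin n → ℝ) :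
    ∑ i, ∑ j, ∑ i', ∑ j',
      ((if i = i' then (1:ℝ) else 0) + 1) * ((if j = j' then (1:ℝ) else 0) + 1)
        * x i j * x i' j'
      = ∑ i, ∑ j, x i j ^ 2 + ∑ i, (∑ j, x i j) ^ 2 + ∑ j, (∑ i, x i j) ^ 2
        + (∑ i, ∑ j, x i j) ^ 2 := by
  have key : ∀ i j : Fin n, ∑ i', ∑ j',
      ((if i = i' then (1:ℝ) else 0) + 1) * ((if j = j' then (1:ℝ) else 0) + 1)
        * x i j * x i' j'
      = x i j ^ 2 + x i j * (∑ j', x i j') + x i j * (∑ i', x i' j)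
        + x i j * (∑ i', ∑ j', x i' j') := by
    intro i j
    have expand : ∀ i' j' : Fin n,
        ((if i = i' then (1:ℝ) else 0) + 1) * ((if j = j' then (1:ℝ) else 0) + 1)
          * x i j * x i' j'
        = (if i = i' then if j = j' then x i j * x i' j' else 0 else 0)
          + (if i = i' then x i j * x i' j' else 0)
          + (if j = j' then x i j * x i' j' else 0) + x i j * x i' j' := by
      intro i' j'
      by_cases h1 : i = i' <;> by_cases h2 : j = j' <;> simp [h1, h2] <;> ring
    have t1 : ∑ i' : Fin n, ∑ j' : Fin n,
        (if i = i' then if j = j' then x i j * x i' j' else 0 else 0) = x i j ^ 2 := by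
      have : ∀ i' : Fin n, (∑ j' : Fin n,
          if i = i' then if j = j' then x i j * x i' j' else 0 else 0)
          = if i = i' then x i j * x i' j else 0 := by
        intro i'
        by_cases h : i = i' <;> simp [h]
      simp [this, sq]
    have t2 : ∑ i' : Fin n, ∑ j' : Fin n,
        (if i = i' then x i j * x i' j' else 0) = x i j * ∑ j', x i j' := by
      have : ∀ i' : Fin n, (∑ j' : Fin n, if i = i' then x i j * x i' j' else 0)
          = if i = i' then x i j * ∑ j', x i' j' else 0 := by
        intro i'
        by_cases h : i = i' <;> simp [h, Finset.mul_sum]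
      simp [this]
    have t3 : ∑ i' : Fin n, ∑ j' : Fin n,
        (if j = j' then x i j * x i' j' else 0) = x i j * ∑ i', x i' j := by
      simp [Finset.mul_sum]
    have t4 : ∑ i' : Fin n, ∑ j' : Fin n, x i j * x i' j'
        = x i j * ∑ i', ∑ j', x i' j' := by
      simp [Finset.mul_sum]
    simp only [expand, Finset.sum_add_distrib, t1, t2, t3, t4]
  simp only [key, Finset.sum_add_distrib]
  congr 1
  congr 1
  congr 1
  · exact Finset.sum_congr rfl fun i _ => by rw [← Finset.sum_mul, sq]
  · rw [Finset.sum_comm]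
    exact Finset.sum_congr rfl fun j _ => by rw [← Finset.sum_mul, sq]
  · simp only [← Finset.sum_mul]
    rw [sq]


lemma stmt8_aux (n : ℕ) :
    ∃ H : Matrix (Fin n × Fin n) (Fin n × Fin n) ℝ,
      (∀ ε : Fin (n + 1) → Fin (n + 1) → ℝ,
          (∀ i, ∑ j, ε i j = 0) → (∀ j, ∑ i, ε i j = 0) →
          ∑ p : Fin n × Fin n, ∑ q : Fin n × Fin n,
              H p q * ε p.1.castSucc p.2.castSucc * ε q.1.castSucc q.2.castSucc =
            ∑ i, ∑ j, ε i j ^ 2) ∧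
      H.PosDef ∧ H.det = ((n + 1 : ℕ) : ℝ) ^ (2 * n) := by
  have hAapp : ∀ i j : Fin n, (1 + Matrix.of fun _ _ => (1:ℝ)) i j
      = (if i = j then (1:ℝ) else 0) + 1 := by
    intro i j
    simp [Matrix.one_apply]
  refine ⟨(1 + Matrix.of fun _ _ => (1:ℝ)) ⊗ₖ (1 + Matrix.of fun _ _ => (1:ℝ)), ?_, ?_, ?_⟩
  · intro ε hrow hcol
    have hrow' : ∀ i, ε i (Fin.last n) = -∑ j : Fin n, ε i j.castSucc := by
      intro i
      have := hrow i
      rw [Fin.sum_univ_castSucc] at this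
      linarith
    have hcol' : ∀ j, ε (Fin.last n) j = -∑ i : Fin n, ε i.castSucc j := by
      intro j
      have := hcol j
      rw [Fin.sum_univ_castSucc] at this
      linarith
    have hRHS : ∑ i, ∑ j, ε i j ^ 2
        = ∑ i : Fin n, ∑ j : Fin n, ε i.castSucc j.castSucc ^ 2
          + ∑ i : Fin n, (∑ j : Fin n, ε i.castSucc j.castSucc) ^ 2
          + ∑ j : Fin n, (∑ i : Fin n, ε i.castSucc j.castSucc) ^ 2
          + (∑ i : Fin n, ∑ j : Fin n, ε i.castSucc j.castSucc) ^ 2 := by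
      rw [Fin.sum_univ_castSucc]
      have h1 : ∀ i : Fin (n+1), ∑ j, ε i j ^ 2
          = ∑ j : Fin n, ε i j.castSucc ^ 2 + ε i (Fin.last n) ^ 2 :=
        fun i => Fin.sum_univ_castSucc _
      simp only [h1]
      rw [Finset.sum_add_distrib]
      have h2 : ∀ i : Fin (n+1), ε i (Fin.last n) ^ 2
          = (∑ j : Fin n, ε i j.castSucc) ^ 2 := by
        intro i; rw [hrow' i]; ring
      have h3 : ∀ j : Fin n, ε (Fin.last n) j.castSucc ^ 2
          = (∑ i : Fin n, ε i.castSucc j.castSucc) ^ 2 := by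
        intro j; rw [hcol' j.castSucc]; ring
      have h4 : ε (Fin.last n) (Fin.last n)
          = ∑ i : Fin n, ∑ j : Fin n, ε i.castSucc j.castSucc := by
        rw [hrow' (Fin.last n)]
        simp only [hcol']
        rw [Finset.sum_neg_distrib, neg_neg]
        exact Finset.sum_comm
      simp only [h2, h3, h4]
      ring
    simp only [Fintype.sum_prod_type, Matrix.kroneckerMap_apply, hAapp]
    rw [hRHS]
    exact quad_key n (fun i j => ε i.castSucc j.castSucc)
  · rw [Matrix.posDef_iff_dotProduct_mulVec]
    constructor
    · ext p q
      simp only [Matrix.conjTranspose_apply, Matrix.kroneckerMap_apply, hAapp, star_trivial]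
      by_cases h1 : p.1 = q.1 <;> by_cases h2 : p.2 = q.2 <;>
        simp [h1, h2, eq_comm]
    · intro v hv
      have hval : dotProduct (star v)
            (((1 + Matrix.of fun _ _ => (1:ℝ)) ⊗ₖ (1 + Matrix.of fun _ _ => (1:ℝ))) *ᵥ v)
          = ∑ i : Fin n, ∑ j : Fin n, v (i, j) ^ 2
            + ∑ i : Fin n, (∑ j : Fin n, v (i, j)) ^ 2
            + ∑ j : Fin n, (∑ i : Fin n, v (i, j)) ^ 2
            + (∑ i : Fin n, ∑ j : Fin n, v (i, j)) ^ 2 := by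
        have expand : dotProduct (star v)
              (((1 + Matrix.of fun _ _ => (1:ℝ)) ⊗ₖ (1 + Matrix.of fun _ _ => (1:ℝ))) *ᵥ v)
            = ∑ p : Fin n × Fin n, ∑ q : Fin n × Fin n,
                ((1 + Matrix.of fun _ _ => (1:ℝ)) ⊗ₖ (1 + Matrix.of fun _ _ => (1:ℝ))) p q
                  * v p * v q := by
          simp only [dotProduct, Matrix.mulVec, star_trivial, Finset.mul_sum,
            dotProduct]
          exact Finset.sum_congr rfl fun p _ => Finset.sum_congr rfl fun q _ => by ring
        rw [expand]
        simp only [Fintype.sum_prod_type, Matrix.kroneckerMap_apply, hAapp]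
        exact quad_key n (fun i j => v (i, j))
      rw [hval]
      obtain ⟨p, hp⟩ := Function.ne_iff.mp hv
      have h0 : 0 < ∑ q : Fin n × Fin n, v q ^ 2 :=
        Finset.sum_pos' (fun q _ => sq_nonneg _) ⟨p, Finset.mem_univ p, pow_two_pos_of_ne_zero (by simpa using hp)⟩
      rw [Fintype.sum_prod_type] at h0
      have hb : 0 ≤ ∑ i : Fin n, (∑ j : Fin n, v (i, j)) ^ 2 :=
        Finset.sum_nonneg fun _ _ => sq_nonneg _
      have hcc : 0 ≤ ∑ j : Fin n, (∑ i : Fin n, v (i, j)) ^ 2 :=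
        Finset.sum_nonneg fun _ _ => sq_nonneg _
      have hd : 0 ≤ (∑ i : Fin n, ∑ j : Fin n, v (i, j)) ^ 2 := sq_nonneg _
      linarith
  · have hJ : (Matrix.of (fun _ _ => (1:ℝ)) : Matrix (Fin n) (Fin n) ℝ)
        = (Matrix.replicateCol Unit (1 : Fin n → ℝ) : Matrix (Fin n) Unit ℝ) * (Matrix.replicateRow Unit (1 : Fin n → ℝ) : Matrix Unit (Fin n) ℝ) := by
      ext i j
      simp [Matrix.mul_apply]
    have hdetA : (1 + Matrix.of fun _ _ => (1:ℝ) : Matrix (Fin n) (Fin n) ℝ).det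
        = (n + 1 : ℝ) := by
      rw [hJ, Matrix.det_one_add_replicateCol_mul_replicateRow]
      simp [dotProduct]
      ring
    rw [Matrix.det_kronecker, hdetA]
    simp only [Fintype.card_fin]
    rw [← pow_add]
    push_cast
    congr 1
    omega

/-- There is a `(k-1)²×(k-1)²` matrix `H` encoding the quadratic form
`ε ↦ ∑_{ij} ε_{ij}²` on matrices with vanishing row and column sums (in the
coordinates given by the top-left `(k-1)×(k-1)` block); `H` is positive definite
and `det H = k^{2(k-1)}`. -/
theorem stmt8 (k : ℕ) (hk : 2 ≤ k) :
    ∃ H : Matrix (Fin (k - 1) × Fin (k - 1)) (Fin (k - 1) × Fin (k - 1)) ℝ,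
      (∀ ε : Fin k → Fin k → ℝ,
          (∀ i, ∑ j, ε i j = 0) → (∀ j, ∑ i, ε i j = 0) →
          ∑ p : Fin (k - 1) × Fin (k - 1), ∑ q : Fin (k - 1) × Fin (k - 1),
              H p q * ε (Fin.castLE (by omega) p.1) (Fin.castLE (by omega) p.2) *
                ε (Fin.castLE (by omega) q.1) (Fin.castLE (by omega) q.2) =
            ∑ i, ∑ j, ε i j ^ 2) ∧
      H.PosDef ∧ H.det = (k : ℝ) ^ (2 * (k - 1)) := by
  obtain ⟨n, rfl⟩ : ∃ n, k = n + 1 := ⟨k - 1, by omega⟩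
  exact stmt8_aux n
end

section
/- Let X be a nonnegative real random variable, F a sub-σ-algebra, and α > 0, and suppose Z is an integrable random variable. If X = |Z − E[Z|F]| · 1{|Z − E[Z|F]| > α c} for a constant c > 0, then E[X | F] ≤ 4 Var(Z | F)/(α c). -/
open MeasureTheory

lemma intmul_aux {Ω : Type*} {m0 : MeasurableSpace Ω} {μ : Measure Ω}
    {f g : Ω → ℝ} (hf : MemLp f 2 μ) (hg : MemLp g 2 μ) :
    Integrable (fun ω => f ω * g ω) μ := by
  exact hf.integrable_mul hg

lemma memℒp_two_condexp_aux {Ω : Type*} {F : MeasurableSpace Ω} {m0 : MeasurableSpace Ω}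
    {μ : Measure Ω} [IsProbabilityMeasure μ] (hF : F ≤ m0)
    {Z : Ω → ℝ} (hZ : MemLp Z 2 μ) : MemLp (μ[Z|F]) 2 μ := by
  haveI : SigmaFinite (μ.trim hF) := inferInstance
  have h : ⇑(↑(condExpL2 ℝ ℝ hF (hZ.toLp Z)) : Lp ℝ 2 μ) =ᵐ[μ] μ[Z|F] :=
    ae_eq_condExp_of_forall_setIntegral_eq hF (hZ.integrable one_le_two)
      (fun s hs hμs => integrableOn_condExpL2_of_measure_ne_top hF hμs.ne _)
      (fun s hs hμs =>
        (integral_condExpL2_eq (𝕜 := ℝ) hF (hZ.toLp Z) hs hμs.ne).trans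
          (setIntegral_congr_ae (hF s hs) ((hZ.coeFn_toLp).mono fun x hx _ => hx)))
      (aestronglyMeasurable_condExpL2 hF _)
  exact (Lp.memLp (↑(condExpL2 ℝ ℝ hF (hZ.toLp Z)) : Lp ℝ 2 μ)).ae_eq h

lemma stmt10_aux {Ω : Type*} {F : MeasurableSpace Ω} {m0 : MeasurableSpace Ω} (μ : Measure Ω)
    [IsProbabilityMeasure μ] (hF : F ≤ m0) (Z : Ω → ℝ) (hZ : MemLp Z 2 μ)
    (α c : ℝ) (hα : 0 < α) (hc : 0 < c) :
    ∀ᵐ ω ∂μ,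
      (μ[fun ω' => if α * c < |Z ω' - (μ[Z|F]) ω'| then |Z ω' - (μ[Z|F]) ω'| else 0|F]) ω ≤
        4 * ((μ[fun ω' => Z ω' ^ 2|F]) ω - ((μ[Z|F]) ω) ^ 2) / (α * c) := by
  haveI : SigmaFinite (μ.trim hF) := inferInstance
  set m : Ω → ℝ := μ[Z|F] with hm
  have h0 : 0 < α * c := mul_pos hα hc
  have hm2 : MemLp m 2 μ := memℒp_two_condexp_aux hF hZ
  have hmsm : StronglyMeasurable[F] m := stronglyMeasurable_condExp
  have hY2 : Integrable (fun ω => (Z ω - m ω) ^ 2) μ := (hZ.sub hm2).integrable_sq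
  have hZ2 : Integrable (fun ω => Z ω ^ 2) μ := hZ.integrable_sq
  have hmZ : Integrable (fun ω => m ω * Z ω) μ := intmul_aux hm2 hZ
  have hmm' : Integrable (fun ω => m ω * m ω) μ := intmul_aux hm2 hm2
  have hW : Integrable (fun ω => m ω * (2 * Z ω - m ω)) μ :=
    ((hmZ.const_mul 2).sub hmm').congr (Filter.Eventually.of_forall fun ω => by simp only [Pi.sub_apply]; ring)
  have hg2 : Integrable (fun ω => 2 * Z ω - m ω) μ :=
    ((hZ.integrable one_le_two).const_mul 2).sub integrable_condExp
  -- pointwise bound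
  have hXle : ∀ ω, (if α * c < |Z ω - m ω| then |Z ω - m ω| else 0)
      ≤ (α * c)⁻¹ * (Z ω - m ω) ^ 2 := by
    intro ω
    split_ifs with h
    · have h2 : (Z ω - m ω) ^ 2 = |Z ω - m ω| * |Z ω - m ω| := by
        rw [← sq_abs]; ring
      rw [le_inv_mul_iff₀ h0, h2]
      exact mul_le_mul_of_nonneg_right h.le (abs_nonneg _)
    · exact mul_nonneg (inv_nonneg.mpr h0.le) (sq_nonneg _)
  have hXnn : ∀ ω, (0:ℝ) ≤ if α * c < |Z ω - m ω| then |Z ω - m ω| else 0 := by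
    intro ω; split_ifs; exacts [abs_nonneg _, le_rfl]
  -- integrability of X
  have hXmeas : AEStronglyMeasurable
      (fun ω => if α * c < |Z ω - m ω| then |Z ω - m ω| else 0) μ := by
    have hYam : AEMeasurable (fun ω => Z ω - m ω) μ :=
      hZ.aestronglyMeasurable.aemeasurable.sub
        ((hmsm.mono hF).measurable.aemeasurable)
    have hgm : Measurable (fun t : ℝ => if α * c < |t| then |t| else 0) :=
      Measurable.ite (measurableSet_lt measurable_const measurable_abs)
        measurable_abs measurable_const
    exact (hgm.comp_aemeasurable hYam).aestronglyMeasurable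
  have hXint : Integrable (fun ω => if α * c < |Z ω - m ω| then |Z ω - m ω| else 0) μ := by
    refine (hY2.const_mul (α * c)⁻¹).mono hXmeas (Filter.Eventually.of_forall fun ω => ?_)
    rw [Real.norm_of_nonneg (hXnn ω),
      Real.norm_of_nonneg (mul_nonneg (inv_nonneg.mpr h0.le) (sq_nonneg (Z ω - m ω)))]
    exact hXle ω
  -- comparison of conditional expectations
  have hcmp := condExp_mono (μ := μ) (m := F) hXint (hY2.const_mul (α * c)⁻¹)
    (Filter.Eventually.of_forall hXle)
  have hsmul : μ[fun ω => (α * c)⁻¹ * (Z ω - m ω) ^ 2|F]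
      =ᵐ[μ] fun ω => (α * c)⁻¹ * (μ[fun ω' => (Z ω' - m ω') ^ 2|F]) ω :=
    condExp_smul (m := F) ((α * c)⁻¹) (fun ω => (Z ω - m ω) ^ 2)
  -- conditional variance identity
  have h1 : μ[fun ω => (Z ω - m ω) ^ 2|F]
      =ᵐ[μ] μ[fun ω => Z ω ^ 2|F] - μ[fun ω => m ω * (2 * Z ω - m ω)|F] := by
    have he : (fun ω => (Z ω - m ω) ^ 2)
        = fun ω => Z ω ^ 2 - m ω * (2 * Z ω - m ω) := funext fun ω => by ring
    rw [he]
    exact condExp_sub hZ2 hW F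
  have h2 : μ[fun ω => m ω * (2 * Z ω - m ω)|F]
      =ᵐ[μ] fun ω => m ω * (μ[fun ω' => 2 * Z ω' - m ω'|F]) ω :=
    condExp_mul_of_stronglyMeasurable_left hmsm hW hg2
  have hmmeq : μ[m|F] = m :=
    condExp_of_stronglyMeasurable hF hmsm integrable_condExp
  have h3 : μ[fun ω' => 2 * Z ω' - m ω'|F] =ᵐ[μ] fun ω => 2 * m ω - m ω := by
    have ha := condExp_sub (μ := μ) (m := F) (f := fun ω => 2 * Z ω) (g := m)
      ((hZ.integrable one_le_two).const_mul 2) (integrable_condExp (m := F) (f := Z))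
    have hb : μ[fun ω => 2 * Z ω|F] =ᵐ[μ] fun ω => 2 * m ω :=
      condExp_smul (m := F) (2:ℝ) Z
    have ha' : μ[fun ω' => 2 * Z ω' - m ω'|F] =ᵐ[μ] μ[fun ω => 2 * Z ω|F] - μ[m|F] := ha
    filter_upwards [ha', hb] with ω ea eb
    rw [ea, Pi.sub_apply, eb, hmmeq]
  have hvar : μ[fun ω => (Z ω - m ω) ^ 2|F]
      =ᵐ[μ] fun ω => (μ[fun ω' => Z ω' ^ 2|F]) ω - m ω ^ 2 := by
    filter_upwards [h1, h2, h3] with ω e1 e2 e3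
    rw [e1, Pi.sub_apply, e2, e3]
    ring
  have hnn : 0 ≤ᵐ[μ] μ[fun ω => (Z ω - m ω) ^ 2|F] :=
    condExp_nonneg (Filter.Eventually.of_forall fun ω => sq_nonneg _)
  filter_upwards [hcmp, hsmul, hvar, hnn] with ω e0 e1 e2 e4
  rw [e1, e2] at e0
  rw [Pi.zero_apply] at e4
  rw [e2] at e4
  refine e0.trans ?_
  rw [div_eq_mul_inv]
  nlinarith [inv_nonneg.mpr h0.le]

open MeasureTheory in
/-- Conditional layering/Chebyshev bound: if
`X = |Z − E[Z|F]| · 1{|Z − E[Z|F]| > α c}`, then `E[X|F] ≤ 4 Var(Z|F)/(α c)`. -/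
theorem stmt10 {Ω : Type*} {m0 : MeasurableSpace Ω} (μ : Measure Ω)
    [IsProbabilityMeasure μ] (F : MeasurableSpace Ω) (hF : F ≤ m0)
    (Z : Ω → ℝ) (hZ : MemLp Z 2 μ) (α c : ℝ) (hα : 0 < α) (hc : 0 < c) :
    ∀ᵐ ω ∂μ,
      (μ[fun ω' => if α * c < |Z ω' - (μ[Z|F]) ω'| then |Z ω' - (μ[Z|F]) ω'| else 0|F]) ω ≤
        4 * ((μ[fun ω' => Z ω' ^ 2|F]) ω - ((μ[Z|F]) ω) ^ 2) / (α * c) :=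
  stmt10_aux μ hF Z hZ α c hα hc
end

section
/- Let k ≥ 2 and d > 0 with d < (k-1)². Define f₂ on k×k probability matrices as f₂(ρ) = H(ρ) + (d/2) ln(1 − ‖ρ_{·⋆}‖₂² − ‖ρ_{⋆·}‖₂² + ‖ρ‖₂²). Then the second-order Taylor expansion of f₂ at the barycentre ρ̄ (all entries 1/k²) along directions ε with zero row and column sums reads f₂(ρ̄ + ε) = f₂(ρ̄) − (D/2) ‖ε‖₂² + O(‖ε‖₂³), where D = k²(1 − d/(k-1)²) > 0. -/
lemma log_quad {u : ℝ} (hu : |u| ≤ 1/2) :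
    |Real.log (1+u) - u + u^2/2| ≤ 2*|u|^3 := by
  have h1 : |(-u)| < 1 := by rw [abs_neg]; linarith
  have := Real.abs_log_sub_add_sum_range_le h1 2
  simp [Finset.sum_range_succ] at this
  have h3 : |u| ^ 3 / (1 - |u|) ≤ 2 * |u|^3 := by
    rw [div_le_iff₀ (by linarith [abs_nonneg u])]
    nlinarith [pow_nonneg (abs_nonneg u) 3]
  rw [show Real.log (1+u) - u + u^2/2 = -u + u^2/(1+1) + Real.log (1+u) by ring]
  exact this.trans h3

lemma entA {x₀ t : ℝ} (hx : 0 < x₀) (ht : |t| ≤ x₀/2) :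
    |(x₀+t)*Real.log (x₀+t) - x₀*Real.log x₀ - t*(Real.log x₀+1) - t^2/(2*x₀)| ≤
      4*|t|^3/x₀^2 := by
  set u : ℝ := t / x₀ with hu_def
  have htx : t = x₀ * u := by
    rw [hu_def, mul_div_assoc', mul_comm, mul_div_assoc, div_self hx.ne', mul_one]
  have hu : |u| ≤ 1/2 := by
    rw [hu_def, abs_div, abs_of_pos hx, div_le_iff₀ hx]
    linarith
  have h1u : (0:ℝ) < 1 + u := by
    have := abs_le.1 hu
    linarith
  have hlog : Real.log (x₀+t) = Real.log x₀ + Real.log (1+u) := by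
    rw [show x₀ + t = x₀ * (1+u) by rw [htx]; ring]
    exact Real.log_mul hx.ne' h1u.ne'
  have hid : (x₀+t)*Real.log (x₀+t) - x₀*Real.log x₀ - t*(Real.log x₀+1) - t^2/(2*x₀)
      = x₀*((1+u)*(Real.log (1+u) - u + u^2/2) - u^3/2) := by
    rw [hlog, htx]; field_simp; ring
  rw [hid, abs_mul, abs_of_pos hx]
  have hE := log_quad hu
  have h1u' : |1 + u| ≤ 3/2 := by
    rw [abs_of_pos h1u]; have := abs_le.1 hu; linarith
  have hb : |(1+u)*(Real.log (1+u) - u + u^2/2) - u^3/2| ≤ 4*|u|^3 := by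
    have h4 : |(1+u)*(Real.log (1+u) - u + u^2/2) - u^3/2|
        ≤ |(1+u)*(Real.log (1+u) - u + u^2/2)| + |(u^3/2)| := abs_sub _ _
    have h5 : |(1+u)*(Real.log (1+u) - u + u^2/2)|
        = |1 + u| * |Real.log (1+u) - u + u^2/2| := abs_mul _ _
    have h6 : |(u^3/2)| = |u|^3/2 := by rw [abs_div, abs_pow]; norm_num
    have h7 := mul_le_mul h1u' hE (abs_nonneg _) (by norm_num)
    have h8 : (0:ℝ) ≤ |u|^3 := pow_nonneg (abs_nonneg u) 3
    nlinarith
  have huabs : |u| = |t|/x₀ := by rw [hu_def, abs_div, abs_of_pos hx]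
  have h9 : x₀ * |(1+u)*(Real.log (1+u) - u + u^2/2) - u^3/2| ≤ x₀ * (4*|u|^3) :=
    mul_le_mul_of_nonneg_left hb hx.le
  refine h9.trans (le_of_eq ?_)
  rw [huabs]; field_simp

lemma logB {a S : ℝ} (ha : 0 < a) (hS : 0 ≤ S) (hSa : S/a ≤ 1/2) :
    |Real.log (a+S) - Real.log a - S/a| ≤ 2*(S/a)^2 := by
  set v : ℝ := S / a with hv_def
  have hv0 : 0 ≤ v := div_nonneg hS ha.le
  have h1 : |(-v)| < 1 := by rw [abs_neg, abs_of_nonneg hv0]; linarith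
  have := Real.abs_log_sub_add_sum_range_le h1 1
  simp [Finset.sum_range_succ] at this
  rw [abs_of_nonneg hv0] at this
  have hlog : Real.log (a+S) = Real.log a + Real.log (1+v) := by
    rw [show a + S = a * (1+v) by rw [hv_def]; field_simp]
    exact Real.log_mul ha.ne' (by linarith)
  have h3 : v^2/(1-v) ≤ 2*v^2 := by
    rw [div_le_iff₀ (by linarith)]
    nlinarith [sq_nonneg v]
  rw [hlog, show Real.log a + Real.log (1+v) - Real.log a - v = -v + Real.log (1+v) by ring]
  exact this.trans h3

set_option maxHeartbeats 1000000

/-- Second-order Taylor expansion of `f₂` at the barycentre `ρ̄` along directions `ε`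
with vanishing row and column sums: `f₂(ρ̄+ε) = f₂(ρ̄) − (D/2)‖ε‖₂² + O(‖ε‖₂³)`
where `D = k²(1 − d/(k-1)²) > 0`. -/
theorem stmt15 (k : ℕ) (hk : 2 ≤ k) (d : ℝ) (hd0 : 0 < d)
    (hd : d < ((k : ℝ) - 1) ^ 2) :
    ∃ C > (0 : ℝ), ∃ r > (0 : ℝ), ∀ ε : Fin k → Fin k → ℝ,
      (∀ i, ∑ j, ε i j = 0) → (∀ j, ∑ i, ε i j = 0) →
      Real.sqrt (∑ i, ∑ j, ε i j ^ 2) < r →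
      |((-∑ i, ∑ j, (1 / (k : ℝ) ^ 2 + ε i j) * Real.log (1 / (k : ℝ) ^ 2 + ε i j)) +
            d / 2 * Real.log (1 - (∑ i, (∑ j, (1 / (k : ℝ) ^ 2 + ε i j)) ^ 2) -
              (∑ j, (∑ i, (1 / (k : ℝ) ^ 2 + ε i j)) ^ 2) +
              ∑ i, ∑ j, (1 / (k : ℝ) ^ 2 + ε i j) ^ 2) -
          ((-∑ _i : Fin k, ∑ _j : Fin k, (1 / (k : ℝ) ^ 2) * Real.log (1 / (k : ℝ) ^ 2)) +
            d / 2 * Real.log (1 - (∑ _i : Fin k, (∑ _j : Fin k, (1 / (k : ℝ) ^ 2)) ^ 2) -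
              (∑ _j : Fin k, (∑ _i : Fin k, (1 / (k : ℝ) ^ 2)) ^ 2) +
              ∑ _i : Fin k, ∑ _j : Fin k, (1 / (k : ℝ) ^ 2) ^ 2))) +
          (k : ℝ) ^ 2 * (1 - d / ((k : ℝ) - 1) ^ 2) / 2 * ∑ i, ∑ j, ε i j ^ 2| ≤
        C * Real.sqrt (∑ i, ∑ j, ε i j ^ 2) ^ 3 := by
  have hK : (2:ℝ) ≤ (k:ℝ) := by exact_mod_cast hk
  set K : ℝ := (k:ℝ) with hKdef
  have hK0 : (0:ℝ) < K := by linarith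
  have hK1 : (0:ℝ) < K - 1 := by linarith
  set x₀ : ℝ := 1 / K ^ 2 with hx₀def
  have hx₀ : 0 < x₀ := by positivity
  set a : ℝ := (K - 1) ^ 2 / K ^ 2 with hadef
  have ha : 0 < a := by positivity
  have hainv : 1 / a ≤ K ^ 2 := by
    rw [hadef, one_div_div, div_le_iff₀ (by positivity)]
    nlinarith [mul_nonneg (mul_nonneg (mul_nonneg hK0.le hK0.le) hK0.le)
      (show (0:ℝ) ≤ K - 2 by linarith)]
  refine ⟨(4 + d) * K ^ 4, by positivity, 1 / (2 * K ^ 2), by positivity, ?_⟩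
  intro ε hrow hcol hr
  set S : ℝ := ∑ i, ∑ j, ε i j ^ 2 with hSdef
  have hS0 : 0 ≤ S := by
    rw [hSdef]
    apply Finset.sum_nonneg; intro i _; apply Finset.sum_nonneg; intro j _; positivity
  set q : ℝ := Real.sqrt S with hqdef
  have hq0 : 0 ≤ q := by rw [hqdef]; exact Real.sqrt_nonneg _
  have hqq : q * q = S := by rw [hqdef]; exact Real.mul_self_sqrt hS0
  have hSr : S < 1 / (4 * K ^ 4) := by
    have h1 : q * q < (1 / (2 * K ^ 2)) * (1 / (2 * K ^ 2)) :=
      mul_self_lt_mul_self hq0 hr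
    rw [hqq] at h1
    have h2 : (1 / (2 * K ^ 2)) * (1 / (2 * K ^ 2)) = 1 / (4 * K ^ 4) := by
      field_simp; ring
    linarith
  have hq1 : q ≤ 1 := by
    have h1 : (1:ℝ) / (2 * K ^ 2) ≤ 1 := by
      rw [div_le_one (by positivity)]; nlinarith
    linarith
  -- entrywise bounds
  have hεq : ∀ i j, |ε i j| ≤ q := by
    intro i j
    have h1 : ε i j ^ 2 ≤ ∑ j', ε i j' ^ 2 :=
      Finset.single_le_sum (f := fun j' => ε i j' ^ 2)
        (fun _ _ => sq_nonneg _) (Finset.mem_univ j)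
    have h2 : (∑ j', ε i j' ^ 2) ≤ S := by
      rw [hSdef]
      exact Finset.single_le_sum (f := fun i' => ∑ j', ε i' j' ^ 2)
        (fun i' _ => Finset.sum_nonneg fun _ _ => sq_nonneg _) (Finset.mem_univ i)
    have h3 := Real.sqrt_le_sqrt (h1.trans h2)
    rw [Real.sqrt_sq_eq_abs] at h3
    rw [hqdef]
    exact h3
  have hεsmall : ∀ i j, |ε i j| ≤ x₀ / 2 := by
    intro i j
    have h1 : q ≤ x₀ / 2 := by
      rw [hx₀def, show (1:ℝ) / K ^ 2 / 2 = 1 / (2 * K ^ 2) by ring]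
      exact hr.le
    exact (hεq i j).trans h1
  -- sum identities
  have F1 : ∀ i, ∑ j, (x₀ + ε i j) = K * x₀ := by
    intro i
    rw [Finset.sum_add_distrib, hrow i, Finset.sum_const, Finset.card_univ,
      Fintype.card_fin, nsmul_eq_mul, ← hKdef]
    ring
  have F2 : ∀ j, ∑ i, (x₀ + ε i j) = K * x₀ := by
    intro j
    rw [Finset.sum_add_distrib, hcol j, Finset.sum_const, Finset.card_univ,
      Fintype.card_fin, nsmul_eq_mul, ← hKdef]
    ring
  have F4 : ∑ i, ∑ j, (x₀ + ε i j) ^ 2 = K ^ 2 * x₀ ^ 2 + S := by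
    have h1 : ∀ i : Fin k, ∑ j, (x₀ + ε i j) ^ 2 = K * x₀ ^ 2 + ∑ j, ε i j ^ 2 := by
      intro i
      have e0 : ∀ j, (x₀ + ε i j) ^ 2 = x₀ ^ 2 + 2 * x₀ * ε i j + ε i j ^ 2 := by
        intro j; ring
      rw [Finset.sum_congr rfl fun j _ => e0 j, Finset.sum_add_distrib,
        Finset.sum_add_distrib, ← Finset.mul_sum, hrow i, Finset.sum_const,
        Finset.card_univ, Fintype.card_fin, nsmul_eq_mul, ← hKdef]
      ring
    rw [Finset.sum_congr rfl fun i _ => h1 i, Finset.sum_add_distrib,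
      Finset.sum_const, Finset.card_univ, Fintype.card_fin, nsmul_eq_mul,
      ← hKdef, ← hSdef]
    ring
  -- log arguments
  have harg1 : 1 - (∑ i, (∑ j, (x₀ + ε i j)) ^ 2) - (∑ j, (∑ i, (x₀ + ε i j)) ^ 2)
      + ∑ i, ∑ j, (x₀ + ε i j) ^ 2 = a + S := by
    simp only [F1, F2]
    rw [F4]
    simp only [Finset.sum_const, Finset.card_univ, Fintype.card_fin, nsmul_eq_mul]
    rw [← hKdef, hadef, hx₀def]
    field_simp
    ring
  have hbase : ∀ c : ℝ, (∑ _i : Fin k, ∑ _j : Fin k, c) = K ^ 2 * c := by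
    intro c
    simp only [Finset.sum_const, Finset.card_univ, Fintype.card_fin, nsmul_eq_mul]
    rw [← hKdef]
    ring
  have harg0 : 1 - (∑ _i : Fin k, (∑ _j : Fin k, x₀) ^ 2)
      - (∑ _j : Fin k, (∑ _i : Fin k, x₀) ^ 2)
      + ∑ _i : Fin k, ∑ _j : Fin k, x₀ ^ 2 = a := by
    simp only [Finset.sum_const, Finset.card_univ, Fintype.card_fin, nsmul_eq_mul]
    rw [← hKdef, hadef, hx₀def]
    field_simp
    ring
  -- entropy sum decomposition
  set A₁ : ℝ := ∑ i, ∑ j, (x₀ + ε i j) * Real.log (x₀ + ε i j) with hA₁def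
  have hA : (∑ i, ∑ j, ((x₀ + ε i j) * Real.log (x₀ + ε i j) - x₀ * Real.log x₀
      - ε i j * (Real.log x₀ + 1) - ε i j ^ 2 / (2 * x₀)))
      = A₁ - K ^ 2 * (x₀ * Real.log x₀) - S / (2 * x₀) := by
    have h1 : ∀ i : Fin k, ∑ j, ((x₀ + ε i j) * Real.log (x₀ + ε i j) - x₀ * Real.log x₀
        - ε i j * (Real.log x₀ + 1) - ε i j ^ 2 / (2 * x₀))
        = (∑ j, (x₀ + ε i j) * Real.log (x₀ + ε i j)) - K * (x₀ * Real.log x₀)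
          - (∑ j, ε i j ^ 2) / (2 * x₀) := by
      intro i
      have e1 : ∑ j, ε i j * (Real.log x₀ + 1) = 0 := by
        rw [← Finset.sum_mul, hrow i, zero_mul]
      have e2 : ∑ j, ε i j ^ 2 / (2 * x₀) = (∑ j, ε i j ^ 2) / (2 * x₀) :=
        (Finset.sum_div _ _ _).symm
      have e3 : (∑ _j : Fin k, x₀ * Real.log x₀) = K * (x₀ * Real.log x₀) := by
        rw [Finset.sum_const, Finset.card_univ, Fintype.card_fin, nsmul_eq_mul, ← hKdef]
      rw [Finset.sum_sub_distrib, Finset.sum_sub_distrib, Finset.sum_sub_distrib,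
        e1, e2, e3]
      ring
    rw [Finset.sum_congr rfl fun i _ => h1 i]
    have e4 : (∑ _i : Fin k, K * (x₀ * Real.log x₀)) = K ^ 2 * (x₀ * Real.log x₀) := by
      rw [Finset.sum_const, Finset.card_univ, Fintype.card_fin, nsmul_eq_mul, ← hKdef]
      ring
    rw [Finset.sum_sub_distrib, Finset.sum_sub_distrib, e4, ← Finset.sum_div,
      ← hSdef, ← hA₁def]
  -- bound the entropy error
  have hEent : |∑ i, ∑ j, ((x₀ + ε i j) * Real.log (x₀ + ε i j) - x₀ * Real.log x₀
      - ε i j * (Real.log x₀ + 1) - ε i j ^ 2 / (2 * x₀))| ≤ 4 * K ^ 4 * q * S := by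
    have hterm : ∀ i j, |(x₀ + ε i j) * Real.log (x₀ + ε i j) - x₀ * Real.log x₀
        - ε i j * (Real.log x₀ + 1) - ε i j ^ 2 / (2 * x₀)|
        ≤ 4 * K ^ 4 * q * ε i j ^ 2 := by
      intro i j
      refine (entA hx₀ (hεsmall i j)).trans ?_
      have h1 : |ε i j| ^ 3 = |ε i j| * ε i j ^ 2 := by
        rw [pow_succ, sq_abs]; ring
      have h2 : |ε i j| * ε i j ^ 2 ≤ q * ε i j ^ 2 :=
        mul_le_mul_of_nonneg_right (hεq i j) (sq_nonneg _)
      have hx2 : x₀ ^ 2 = 1 / K ^ 4 := by rw [hx₀def]; field_simp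
      calc 4 * |ε i j| ^ 3 / x₀ ^ 2 = 4 * K ^ 4 * |ε i j| ^ 3 := by
            rw [hx2]; field_simp
        _ ≤ 4 * K ^ 4 * (q * ε i j ^ 2) := by
            rw [h1]; exact mul_le_mul_of_nonneg_left h2 (by positivity)
        _ = 4 * K ^ 4 * q * ε i j ^ 2 := by ring
    calc |∑ i, ∑ j, ((x₀ + ε i j) * Real.log (x₀ + ε i j) - x₀ * Real.log x₀
        - ε i j * (Real.log x₀ + 1) - ε i j ^ 2 / (2 * x₀))|
        ≤ ∑ i, |∑ j, ((x₀ + ε i j) * Real.log (x₀ + ε i j) - x₀ * Real.log x₀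
          - ε i j * (Real.log x₀ + 1) - ε i j ^ 2 / (2 * x₀))| :=
          Finset.abs_sum_le_sum_abs _ _
      _ ≤ ∑ i, ∑ j, |(x₀ + ε i j) * Real.log (x₀ + ε i j) - x₀ * Real.log x₀
          - ε i j * (Real.log x₀ + 1) - ε i j ^ 2 / (2 * x₀)| :=
          Finset.sum_le_sum fun i _ => Finset.abs_sum_le_sum_abs _ _
      _ ≤ ∑ i, ∑ j, 4 * K ^ 4 * q * ε i j ^ 2 :=
          Finset.sum_le_sum fun i _ => Finset.sum_le_sum fun j _ => hterm i j
      _ = 4 * K ^ 4 * q * S := by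
          rw [hSdef, Finset.mul_sum]
          exact Finset.sum_congr rfl fun i _ => by rw [Finset.mul_sum]
  -- log error
  have hSa : S / a ≤ 1 / 2 := by
    have h1 : S / a = S * (1 / a) := by ring
    have h2 : S * (1 / a) ≤ S * K ^ 2 := mul_le_mul_of_nonneg_left hainv hS0
    have h3 : S * K ^ 2 ≤ 1 / (4 * K ^ 4) * K ^ 2 :=
      mul_le_mul_of_nonneg_right hSr.le (by positivity)
    have h4 : 1 / (4 * K ^ 4) * K ^ 2 ≤ 1 / 2 := by
      rw [div_mul_eq_mul_div, div_le_div_iff₀ (by positivity) (by norm_num)]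
      nlinarith
    linarith
  have hE2 := logB ha hS0 hSa
  have hE2' : |Real.log (a + S) - Real.log a - S / a| ≤ 2 * K ^ 4 * S ^ 2 := by
    refine hE2.trans ?_
    have h1 : (S / a) ^ 2 = S ^ 2 * (1 / a) ^ 2 := by ring
    have h2 : (1 / a) ^ 2 ≤ (K ^ 2) ^ 2 :=
      pow_le_pow_left₀ (by positivity) hainv 2
    have h3 : S ^ 2 * (1 / a) ^ 2 ≤ S ^ 2 * (K ^ 2) ^ 2 :=
      mul_le_mul_of_nonneg_left h2 (sq_nonneg S)
    have h4 : S ^ 2 * (K ^ 2) ^ 2 = K ^ 4 * S ^ 2 := by ring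
    rw [h1]
    linarith
  -- rewrite the goal
  rw [harg1, harg0, hbase (x₀ * Real.log x₀)]
  have hiden : (-A₁ + d / 2 * Real.log (a + S)
      - (-(K ^ 2 * (x₀ * Real.log x₀)) + d / 2 * Real.log a)
      + K ^ 2 * (1 - d / (K - 1) ^ 2) / 2 * S)
      = -(A₁ - K ^ 2 * (x₀ * Real.log x₀) - S / (2 * x₀))
        + d / 2 * (Real.log (a + S) - Real.log a - S / a) := by
    rw [hadef, hx₀def]
    have hK1ne : (K - 1) ≠ 0 := hK1.ne'
    have hKne : K ≠ 0 := hK0.ne'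
    field_simp
    ring
  rw [hiden, ← hA]
  have habs : |-(∑ i, ∑ j, ((x₀ + ε i j) * Real.log (x₀ + ε i j) - x₀ * Real.log x₀
      - ε i j * (Real.log x₀ + 1) - ε i j ^ 2 / (2 * x₀)))
      + d / 2 * (Real.log (a + S) - Real.log a - S / a)|
      ≤ 4 * K ^ 4 * q * S + d / 2 * (2 * K ^ 4 * S ^ 2) := by
    refine (abs_add_le _ _).trans ?_
    rw [abs_neg, abs_mul, abs_of_pos (show (0:ℝ) < d / 2 by linarith)]
    have h5 := mul_le_mul_of_nonneg_left hE2'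
      (le_of_lt (show (0:ℝ) < d / 2 by linarith))
    linarith [hEent]
  refine habs.trans ?_
  have hq3 : q ^ 3 = q * S := by rw [← hqq]; ring
  rw [hq3]
  have hS2 : S ^ 2 ≤ q * S := by
    nlinarith [mul_nonneg hS0 (mul_nonneg hq0 (show (0:ℝ) ≤ 1 - q by linarith)), hqq]
  nlinarith [mul_nonneg (show (0:ℝ) ≤ d * K ^ 4 by positivity)
    (show (0:ℝ) ≤ q * S - S ^ 2 by linarith)]
end
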